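/- Let G be a compact group acting continuously and isometrically on a Banach space V̄ via α, and fix a length function ℓ on G. Define L(v) = sup { ‖α_x(v) − v‖ / ℓ(x) : x ∈ G, x ≠ e }. Then V := { v ∈ V̄ : L(v) < ∞ } is a dense linear subspace of V̄. -/

import Mathlib

open MeasureTheory Set


/-- let `G` be a compact group acting continuously and isometrically on
a Banach space `V̄` via `α`, with a length function `ℓ` on `G`. With
`L(v) = sup { ‖α_x(v) − v‖ / ℓ(x) : x ≠ e }`, the set `{v : L(v) < ∞}` is a dense
linear subspace of `V̄`. -/
theorem lipschitz_elements_dense {G : Type*} [Group G] [TopologicalSpace G]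
    [IsTopologicalGroup G] [CompactSpace G] [T2Space G]
    {V : Type*} [NormedAddCommGroup V] [NormedSpace ℝ V] [CompleteSpace V]
    (α : G →* (V ≃ₗᵢ[ℝ] V)) (hα : ∀ v : V, Continuous fun x : G => α x v)
    (ℓ : G → ℝ) (hℓc : Continuous ℓ) (hℓsub : ∀ x y, ℓ (x * y) ≤ ℓ x + ℓ y)
    (hℓsymm : ∀ x, ℓ x⁻¹ = ℓ x) (hℓzero : ∀ x, ℓ x = 0 ↔ x = 1) :
    ∃ W : Submodule ℝ V,
      (W : Set V) = {v : V | BddAbove {r : ℝ | ∃ x : G, x ≠ 1 ∧ r = ‖α x v - v‖ / ℓ x}} ∧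
      Dense (W : Set V) := by
  have hℓ1 : ℓ 1 = 0 := (hℓzero 1).mpr rfl
  have hℓnn : ∀ x, 0 ≤ ℓ x := by
    intro x
    have h := hℓsub x x⁻¹
    rw [mul_inv_cancel, hℓ1, hℓsymm] at h
    linarith
  have hℓpos : ∀ x : G, x ≠ 1 → 0 < ℓ x := fun x hx =>
    lt_of_le_of_ne (hℓnn x) fun h => hx ((hℓzero x).mp h.symm)
  set S := {v : V | BddAbove {r : ℝ | ∃ x : G, x ≠ 1 ∧ r = ‖α x v - v‖ / ℓ x}} with hS
  have hmem : ∀ v : V, v ∈ S ↔ ∃ B : ℝ, ∀ x : G, x ≠ 1 → ‖α x v - v‖ ≤ B * ℓ x := by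
    intro v
    constructor
    · rintro ⟨B, hB⟩
      exact ⟨B, fun x hx => (div_le_iff₀ (hℓpos x hx)).mp (hB ⟨x, hx, rfl⟩)⟩
    · rintro ⟨B, hB⟩
      refine ⟨B, ?_⟩
      rintro r ⟨x, hx, rfl⟩
      exact (div_le_iff₀ (hℓpos x hx)).mpr (hB x hx)
  refine ⟨{ carrier := S
            add_mem' := ?_
            zero_mem' := ?_
            smul_mem' := ?_ }, rfl, ?_⟩
  · intro v w hv hw
    obtain ⟨B1, hB1⟩ := (hmem v).mp hv
    obtain ⟨B2, hB2⟩ := (hmem w).mp hw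
    refine (hmem _).mpr ⟨B1 + B2, fun x hx => ?_⟩
    have h : α x (v + w) - (v + w) = (α x v - v) + (α x w - w) := by
      rw [map_add]; abel
    rw [h]
    calc ‖(α x v - v) + (α x w - w)‖ ≤ ‖α x v - v‖ + ‖α x w - w‖ := norm_add_le _ _
      _ ≤ B1 * ℓ x + B2 * ℓ x := add_le_add (hB1 x hx) (hB2 x hx)
      _ = (B1 + B2) * ℓ x := by ring
  · exact (hmem 0).mpr ⟨0, fun x hx => by simp [mul_comm, mul_nonneg (hℓnn x)]⟩
  · intro c v hv
    obtain ⟨B, hB⟩ := (hmem v).mp hv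
    refine (hmem _).mpr ⟨|c| * B, fun x hx => ?_⟩
    have h : α x (c • v) - c • v = c • (α x v - v) := by
      rw [_root_.map_smul, smul_sub]
    rw [h, norm_smul, Real.norm_eq_abs, mul_assoc]
    exact mul_le_mul_of_nonneg_left (hB x hx) (abs_nonneg c)
  -- density
  rw [Metric.dense_iff]
  intro v ε hε
  -- choose δ
  obtain ⟨δ, hδpos, hδ⟩ : ∃ δ > 0, ∀ x : G, ℓ x < δ → ‖α x v - v‖ < ε / 2 := by
    have hcont : Continuous fun x : G => ‖α x v - v‖ := ((hα v).sub continuous_const).norm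
    set K := {x : G | ε / 2 ≤ ‖α x v - v‖} with hK
    have hKc : IsClosed K := isClosed_le continuous_const hcont
    have h1K : (1 : G) ∉ K := by
      simp only [hK, mem_setOf_eq, map_one, LinearIsometryEquiv.coe_one, id_eq, sub_self,
        norm_zero, not_le]
      positivity
    rcases K.eq_empty_or_nonempty with h | h
    · refine ⟨1, one_pos, fun x _ => ?_⟩
      by_contra hc
      have : x ∈ K := not_lt.mp hc
      simp [h] at this
    · obtain ⟨x₀, hx₀K, hx₀min⟩ := hKc.isCompact.exists_isMinOn h hℓc.continuousOn
      have hx₀ : x₀ ≠ 1 := fun h' => h1K (h' ▸ hx₀K)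
      refine ⟨ℓ x₀, hℓpos x₀ hx₀, fun x hx => ?_⟩
      by_contra hc
      have hxK : x ∈ K := not_lt.mp hc
      exact absurd (hx₀min hxK) (not_le.mpr hx)
  -- measure setup
  borelize G
  set μ : Measure G := Measure.haar with hμ
  -- bump function
  set ψ : G → ℝ := fun x => max 0 (1 - ℓ x / δ) with hψ
  have hψc : Continuous ψ := continuous_const.max (continuous_const.sub (hℓc.div_const δ))
  have hψnn : ∀ x, 0 ≤ ψ x := fun x => le_max_left _ _
  have hψ1 : ψ 1 = 1 := by simp [hψ, hℓ1]
  have hψsupp : ∀ x : G, ψ x ≠ 0 → ℓ x < δ := by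
    intro x hx
    by_contra hc
    apply hx
    have h1 : 1 - ℓ x / δ ≤ 0 := by
      rw [sub_nonpos, le_div_iff₀ hδpos, one_mul]
      exact not_lt.mp hc
    simp [hψ, max_eq_left h1]
  have hψlip : ∀ y x : G, |ψ (y⁻¹ * x) - ψ x| ≤ ℓ y / δ := by
    intro y x
    have h1 : ℓ (y⁻¹ * x) ≤ ℓ y + ℓ x := by
      calc ℓ (y⁻¹ * x) ≤ ℓ y⁻¹ + ℓ x := hℓsub _ _
        _ = ℓ y + ℓ x := by rw [hℓsymm]
    have h2 : ℓ x ≤ ℓ y + ℓ (y⁻¹ * x) := by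
      have := hℓsub y (y⁻¹ * x)
      rwa [mul_inv_cancel_left] at this
    have habs : |ℓ (y⁻¹ * x) - ℓ x| ≤ ℓ y := abs_sub_le_iff.mpr ⟨by linarith, by linarith⟩
    calc |ψ (y⁻¹ * x) - ψ x|
        = |max (1 - ℓ (y⁻¹ * x) / δ) 0 - max (1 - ℓ x / δ) 0| := by
          simp only [hψ]
          rw [max_comm (0:ℝ) (1 - ℓ (y⁻¹ * x) / δ), max_comm (0:ℝ) (1 - ℓ x / δ)]
      _ ≤ |(1 - ℓ (y⁻¹ * x) / δ) - (1 - ℓ x / δ)| := abs_max_sub_max_le_abs _ _ _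
      _ = |ℓ (y⁻¹ * x) - ℓ x| / δ := by
          rw [show (1 - ℓ (y⁻¹ * x) / δ) - (1 - ℓ x / δ) = (ℓ x - ℓ (y⁻¹ * x)) / δ by ring,
            abs_div, abs_of_pos hδpos, abs_sub_comm]
      _ ≤ ℓ y / δ := by gcongr
  -- integrability facts
  have hψint : Integrable ψ μ :=
    hψc.integrable_of_hasCompactSupport (HasCompactSupport.of_compactSpace ψ)
  have hfc : Continuous fun x : G => ψ x • α x v := hψc.smul (hα v)
  have hfint : Integrable (fun x : G => ψ x • α x v) μ :=
    hfc.integrable_of_hasCompactSupport (HasCompactSupport.of_compactSpace _)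
  -- positivity of the normalization constant
  set c : ℝ := ∫ x, ψ x ∂μ with hc
  have hcpos : 0 < c := by
    rw [hc, integral_pos_iff_support_of_nonneg hψnn hψint]
    have hopen : IsOpen (Function.support ψ) := by
      rw [Function.support_eq_preimage]
      exact (isOpen_compl_singleton).preimage hψc
    refine hopen.measure_pos μ ⟨1, ?_⟩
    simp [Function.mem_support, hψ1]
  -- the averaged vector
  set w : V := c⁻¹ • ∫ x, ψ x • α x v ∂μ with hw
  refine ⟨w, ?_, ?_⟩
  -- w is close to v
  · have key : w - v = c⁻¹ • ∫ x, ψ x • (α x v - v) ∂μ := by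
      have h1 : Integrable (fun x : G => ψ x • v) μ := hψint.smul_const v
      have h2 : ∫ x, ψ x • (α x v - v) ∂μ
          = (∫ x, ψ x • α x v ∂μ) - ∫ x, ψ x • v ∂μ := by
        rw [← integral_sub hfint h1]
        simp [smul_sub]
      rw [h2, integral_smul_const, smul_sub, smul_smul, inv_mul_cancel₀ hcpos.ne', one_smul,
        ← hw]
    have hbound : ‖w - v‖ ≤ ε / 2 := by
      rw [key, norm_smul, Real.norm_eq_abs, abs_of_pos (inv_pos.mpr hcpos)]
      have hle : ‖∫ x, ψ x • (α x v - v) ∂μ‖ ≤ ∫ x, ψ x * (ε / 2) ∂μ := by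
        refine (norm_integral_le_integral_norm _).trans ?_
        refine integral_mono ?_ (hψint.mul_const _) ?_
        · exact ((hψc.smul ((hα v).sub continuous_const)).norm).integrable_of_hasCompactSupport
            (HasCompactSupport.of_compactSpace _)
        · intro x
          show ‖ψ x • (α x v - v)‖ ≤ ψ x * (ε / 2)
          rw [norm_smul, Real.norm_eq_abs, abs_of_nonneg (hψnn x)]
          rcases eq_or_ne (ψ x) 0 with h | h
          · simp [h, mul_nonneg (hψnn x) (by positivity : (0:ℝ) ≤ ε / 2)]
          · exact mul_le_mul_of_nonneg_left (hδ x (hψsupp x h)).le (hψnn x)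
      have : ∫ x, ψ x * (ε / 2) ∂μ = c * (ε / 2) := by
        rw [integral_mul_const, ← hc]
      rw [this] at hle
      calc c⁻¹ * ‖∫ x, ψ x • (α x v - v) ∂μ‖ ≤ c⁻¹ * (c * (ε / 2)) := by
            exact mul_le_mul_of_nonneg_left hle (inv_pos.mpr hcpos).le
        _ = ε / 2 := by field_simp
    rw [Metric.mem_ball, dist_eq_norm]
    exact lt_of_le_of_lt hbound (by linarith)
  -- w is Lipschitz
  · refine (hmem w).mpr ⟨c⁻¹ * ‖v‖ * (μ univ).toReal / δ, fun y hy => ?_⟩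
    have hmove : α y w - w = c⁻¹ • ∫ x, (ψ (y⁻¹ * x) - ψ x) • α x v ∂μ := by
      have h1 : α y w = c⁻¹ • ∫ x, ψ x • α (y * x) v ∂μ := by
        rw [hw, _root_.map_smul]
        congr 1
        have hcomm := (α y).toLinearIsometry.integral_comp_comm (μ := μ)
          (fun x : G => ψ x • α x v)
        simp only [LinearIsometryEquiv.coe_toLinearIsometry] at hcomm
        rw [← hcomm]
        congr 1
        ext x
        simp only [LinearIsometryEquiv.coe_toLinearIsometry, _root_.map_smul]
        congr 1
        rw [map_mul]
        rfl
      have h2 : ∫ x, ψ x • α (y * x) v ∂μ = ∫ x, ψ (y⁻¹ * x) • α x v ∂μ := by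
        have := integral_mul_left_eq_self (μ := μ) (fun x : G => ψ (y⁻¹ * x) • α x v) y
        simp only [inv_mul_cancel_left] at this
        exact this
      have h3 : Integrable (fun x : G => ψ (y⁻¹ * x) • α x v) μ := by
        refine Continuous.integrable_of_hasCompactSupport ?_
          (HasCompactSupport.of_compactSpace _)
        exact (hψc.comp (continuous_const.mul continuous_id)).smul (hα v)
      rw [h1, h2, hw, ← smul_sub, ← integral_sub h3 hfint]
      simp_rw [sub_smul]
    rw [hmove, norm_smul, Real.norm_eq_abs, abs_of_pos (inv_pos.mpr hcpos)]
    have hbd : ‖∫ x, (ψ (y⁻¹ * x) - ψ x) • α x v ∂μ‖ ≤ ℓ y / δ * ‖v‖ * (μ univ).toReal := by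
      refine norm_integral_le_of_norm_le_const (Filter.Eventually.of_forall fun x => ?_)
      rw [norm_smul, Real.norm_eq_abs, LinearIsometryEquiv.norm_map]
      exact mul_le_mul_of_nonneg_right (hψlip y x) (norm_nonneg v)
    calc c⁻¹ * ‖∫ x, (ψ (y⁻¹ * x) - ψ x) • α x v ∂μ‖
        ≤ c⁻¹ * (ℓ y / δ * ‖v‖ * (μ univ).toReal) :=
          mul_le_mul_of_nonneg_left hbd (inv_pos.mpr hcpos).le
      _ = c⁻¹ * ‖v‖ * (μ univ).toReal / δ * ℓ y := by ring
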